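/- Let h ≥ 0 and suppose real numbers t_v ≥ √3/2 with weights n_v ≥ 1 satisfy −∑_v 6 n_v log t_v − ∑_v n_v log|Δ(t_v)| ≤ 12 d h, where log|Δ(t_v)| ≤ −2π t_v. If moreover log t_v ≤ t_v/e for each v, then ∑_v n_v t_v ≤ (12/(2π − 6/e))·d·h ≤ 3·d·h. -/

import Mathlib

/-- Let `h ≥ 0`, `d ≥ 1` an integer, and suppose reals `t_v ≥ √3/2` with weights
`n_v ≥ 1` (over a finite index set) satisfy
`−∑ 6 n_v log t_v − ∑ n_v L_v ≤ 12 d h`, where `L_v = log|Δ(t_v)| ≤ −2π t_v`.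
If moreover `log t_v ≤ t_v/e` for each `v`, then
`∑ n_v t_v ≤ (12/(2π − 6/e))·d·h ≤ 3·d·h`. -/
theorem sum_weighted_t_le {ι : Type*} [Fintype ι] (d : ℕ) (hd : 1 ≤ d)
    (h : ℝ) (hh : 0 ≤ h) (t n L : ι → ℝ)
    (ht : ∀ v, Real.sqrt 3 / 2 ≤ t v) (hn : ∀ v, 1 ≤ n v)
    (hL : ∀ v, L v ≤ -(2 * Real.pi) * t v)
    (hmain : -∑ v, 6 * n v * Real.log (t v) - ∑ v, n v * L v ≤ 12 * d * h)
    (hlog : ∀ v, Real.log (t v) ≤ t v / Real.exp 1) :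
    (∑ v, n v * t v) ≤ 12 / (2 * Real.pi - 6 / Real.exp 1) * d * h ∧
      12 / (2 * Real.pi - 6 / Real.exp 1) * d * h ≤ 3 * d * h := by
  have he := Real.exp_one_gt_d9
  have hπ := Real.pi_gt_d6
  have hepos : (0:ℝ) < Real.exp 1 := Real.exp_pos 1
  have h6e : 6 / Real.exp 1 < 2.21 := by
    rw [div_lt_iff₀ hepos]; nlinarith
  have hc : (4:ℝ) ≤ 2 * Real.pi - 6 / Real.exp 1 := by nlinarith
  have hcpos : (0:ℝ) < 2 * Real.pi - 6 / Real.exp 1 := by linarith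
  have hdh : (0:ℝ) ≤ (d:ℝ) * h := mul_nonneg (Nat.cast_nonneg d) hh
  have key : (2 * Real.pi - 6 / Real.exp 1) * ∑ v, n v * t v ≤ 12 * d * h := by
    have h1 : ∑ v, ((2 * Real.pi - 6 / Real.exp 1) * (n v * t v)) ≤
        ∑ v, (-(6 * n v * Real.log (t v)) - n v * L v) := by
      apply Finset.sum_le_sum
      intro v _
      have hnv := hn v
      have htv : 0 < t v := lt_of_lt_of_le (by positivity) (ht v)
      have h2 : n v * L v ≤ n v * (-(2 * Real.pi) * t v) :=
        mul_le_mul_of_nonneg_left (hL v) (by linarith)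
      have h3 : 6 * n v * Real.log (t v) ≤ 6 * n v * (t v / Real.exp 1) :=
        mul_le_mul_of_nonneg_left (hlog v) (by linarith)
      have h4 : 6 * n v * (t v / Real.exp 1) = 6 / Real.exp 1 * (n v * t v) := by
        field_simp
      nlinarith
    calc (2 * Real.pi - 6 / Real.exp 1) * ∑ v, n v * t v
        = ∑ v, ((2 * Real.pi - 6 / Real.exp 1) * (n v * t v)) := by
          rw [Finset.mul_sum]
      _ ≤ ∑ v, (-(6 * n v * Real.log (t v)) - n v * L v) := h1
      _ = -∑ v, 6 * n v * Real.log (t v) - ∑ v, n v * L v := by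
          rw [Finset.sum_sub_distrib, Finset.sum_neg_distrib]
      _ ≤ 12 * d * h := hmain
  constructor
  · rw [div_mul_eq_mul_div, div_mul_eq_mul_div, le_div_iff₀ hcpos]
    nlinarith
  · have h12 : 12 / (2 * Real.pi - 6 / Real.exp 1) ≤ 3 := by
      rw [div_le_iff₀ hcpos]; linarith
    calc 12 / (2 * Real.pi - 6 / Real.exp 1) * d * h
        = 12 / (2 * Real.pi - 6 / Real.exp 1) * (d * h) := by ring
      _ ≤ 3 * (d * h) := mul_le_mul_of_nonneg_right h12 hdh
      _ = 3 * d * h := by ring
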